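/- For any x ∈ R^n, δ > 0, and nonnegative measurable f, g: ∬_{max(|x-y|,|x-z|) > δ/2} (|x-y|+|x-z|)^{-2n-1} f(y) g(z) dy dz ≤ C δ^{-1} M(f,g)(x), where M is the bilinear maximal function and C depends only on n. -/

import Mathlib

open MeasureTheory Set Filter

noncomputable section

/-- A (closed axis-parallel) cube in `ℝⁿ`. -/
def IsCube {n : ℕ} (Q : Set (Fin n → ℝ)) : Prop :=
  ∃ (c : Fin n → ℝ) (h : ℝ), 0 < h ∧ Q = Set.Icc c (fun i => c i + h)

/-- The average of `f` over `Q`. -/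
def avg {n : ℕ} (Q : Set (Fin n → ℝ)) (f : (Fin n → ℝ) → ℝ) : ℝ :=
  (MeasureTheory.volume Q).toReal⁻¹ * ∫ x in Q, f x

/-- The `A_p` ratio of the weight `w` on the cube `Q`. -/
def apRatio {n : ℕ} (p : ℝ) (w : (Fin n → ℝ) → ℝ) (Q : Set (Fin n → ℝ)) : ℝ :=
  avg Q w * (avg Q (fun x => w x ^ (1 - p / (p - 1)))) ^ (p - 1)

/-- The Muckenhoupt `A_p` constant of `w`. -/
def apConst {n : ℕ} (p : ℝ) (w : (Fin n → ℝ) → ℝ) : ℝ :=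
  sSup {r : ℝ | ∃ Q, IsCube Q ∧ r = apRatio p w Q}

/-- `w` is a Muckenhoupt `A_p` weight on `ℝⁿ`. -/
def IsAp {n : ℕ} (p : ℝ) (w : (Fin n → ℝ) → ℝ) : Prop :=
  (∀ x, 0 ≤ w x) ∧ MeasureTheory.LocallyIntegrable w MeasureTheory.volume ∧
    BddAbove {r : ℝ | ∃ Q, IsCube Q ∧ r = apRatio p w Q}

/-- Average of an `ℝ≥0∞`-valued function over a set. -/
def avgE {n : ℕ} (Q : Set (Fin n → ℝ)) (f : (Fin n → ℝ) → ENNReal) : ENNReal :=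
  (∫⁻ x in Q, f x) / MeasureTheory.volume Q

/-- The bilinear maximal function `M(f,g)(x) = sup_{Q ∋ x} (⨍_Q |f|)(⨍_Q |g|)`. -/
def bmaxFn {n : ℕ} (f g : (Fin n → ℝ) → ℝ) (x : Fin n → ℝ) : ENNReal :=
  ⨆ (Q : Set (Fin n → ℝ)) (_ : IsCube Q ∧ x ∈ Q),
    avgE Q (fun y => ENNReal.ofReal |f y|) * avgE Q (fun z => ENNReal.ofReal |g z|)

/-- An interval (one-dimensional cube) in `ℝ`. -/
def IsCubeR (Q : Set ℝ) : Prop := ∃ a h : ℝ, 0 < h ∧ Q = Set.Icc a (a + h)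

/-- Average over a subset of `ℝ`. -/
def avgR (Q : Set ℝ) (f : ℝ → ℝ) : ℝ :=
  (MeasureTheory.volume Q).toReal⁻¹ * ∫ x in Q, f x

/-- The `A_p` ratio on an interval. -/
def apRatioR (p : ℝ) (w : ℝ → ℝ) (Q : Set ℝ) : ℝ :=
  avgR Q w * (avgR Q (fun x => w x ^ (1 - p / (p - 1)))) ^ (p - 1)

/-- `w` is a Muckenhoupt `A_p` weight on `ℝ`. -/
def IsApR (p : ℝ) (w : ℝ → ℝ) : Prop :=
  (∀ x, 0 ≤ w x) ∧ MeasureTheory.LocallyIntegrable w MeasureTheory.volume ∧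
    BddAbove {r : ℝ | ∃ Q, IsCubeR Q ∧ r = apRatioR p w Q}

/-- `w` is an `A_1` weight on `ℝ`: the average over any interval is dominated by `C w`
a.e. on that interval. -/
def IsA1R (w : ℝ → ℝ) : Prop :=
  (∀ x, 0 ≤ w x) ∧ MeasureTheory.LocallyIntegrable w MeasureTheory.volume ∧
    ∃ C : ℝ, ∀ a h : ℝ, 0 < h → ∀ᵐ x ∂MeasureTheory.volume,
      x ∈ Set.Icc a (a + h) → h⁻¹ * ∫ t in Set.Icc a (a + h), w t ≤ C * w x


/-- `∬_{max(|x-y|,|x-z|) > δ/2} (|x-y|+|x-z|)^{-2n-1} f(y)g(z) dy dz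
≤ C δ^{-1} M(f,g)(x)`. -/
theorem stmt15 (n : ℕ) :
    ∃ C : ℝ, 0 < C ∧
      ∀ x : Fin n → ℝ, ∀ δ : ℝ, 0 < δ → ∀ f g : (Fin n → ℝ) → ℝ,
        Measurable f → Measurable g → (∀ y, 0 ≤ f y) → (∀ z, 0 ≤ g z) →
        (∫⁻ y, ∫⁻ z in {z : Fin n → ℝ | δ / 2 < max ‖x - y‖ ‖x - z‖},
            ENNReal.ofReal ((‖x - y‖ + ‖x - z‖) ^ (-(2 * n : ℝ) - 1) * f y * g z)) ≤
          ENNReal.ofReal (C / δ) * bmaxFn f g x := by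

  classical
  refine ⟨2 ^ (4 * n + 2), by positivity, ?_⟩
  intro x δ hδ f g hf hg hf0 hg0
  set e : ℝ := -(2 * n : ℝ) - 1 with he
  have he_neg : e ≤ 0 := by
    have : (0:ℝ) ≤ 2 * n := by positivity
    simp only [he]; linarith
  -- radii and cubes
  set r : ℕ → ℝ := fun j => 2 ^ j * δ with hr
  have hrpos : ∀ j, 0 < r j := fun j => by positivity
  set Q : ℕ → Set (Fin n → ℝ) := fun j =>
    Icc (fun i => x i - r j) (fun i => (x i - r j) + 2 * r j) with hQdef
  have hQcube : ∀ j, IsCube (Q j) :=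
    fun j => ⟨fun i => x i - r j, 2 * r j, by positivity, rfl⟩
  have hQmeas : ∀ j, MeasurableSet (Q j) := fun j => measurableSet_Icc
  have hxQ : ∀ j, x ∈ Q j := by
    intro j
    constructor <;> intro i <;> simp only [] <;> [linarith [hrpos j]; linarith [hrpos j]]
  have hmemQ : ∀ j (w : Fin n → ℝ), ‖x - w‖ ≤ r j → w ∈ Q j := by
    intro j w hw
    have h := (pi_norm_le_iff_of_nonneg (hrpos j).le).mp hw
    constructor <;> intro i <;>
      · have hi := abs_le.mp (by simpa [Real.norm_eq_abs] using h i)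
        simp only [Pi.sub_apply] at hi ⊢
        obtain ⟨h1, h2⟩ := hi
        linarith
  have hvol : ∀ j, volume (Q j) = ENNReal.ofReal (2 * r j) ^ n := by
    intro j; rw [hQdef]; rw [Real.volume_Icc_pi]; simp
  have hvol0 : ∀ j, volume (Q j) ≠ 0 := by
    intro j; rw [hvol j]
    exact pow_ne_zero _ (ENNReal.ofReal_pos.mpr (by positivity)).ne'
  have hvoltop : ∀ j, volume (Q j) ≠ ⊤ := by
    intro j; rw [hvol j]; exact ENNReal.pow_ne_top ENNReal.ofReal_ne_top
  set B : ENNReal := bmaxFn f g x with hB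
  -- the cube bound: product of integrals over Q j is at most vol² · B
  have hcube : ∀ j, (∫⁻ y in Q j, ENNReal.ofReal (f y)) * (∫⁻ z in Q j, ENNReal.ofReal (g z))
      ≤ volume (Q j) * volume (Q j) * B := by
    intro j
    have habsf : (fun y => ENNReal.ofReal |f y|) = fun y => ENNReal.ofReal (f y) :=
      funext fun y => by rw [abs_of_nonneg (hf0 y)]
    have habsg : (fun z => ENNReal.ofReal |g z|) = fun z => ENNReal.ofReal (g z) :=
      funext fun z => by rw [abs_of_nonneg (hg0 z)]
    have hb : avgE (Q j) (fun y => ENNReal.ofReal |f y|) *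
        avgE (Q j) (fun z => ENNReal.ofReal |g z|) ≤ B := by
      rw [hB, bmaxFn]
      exact le_iSup_of_le (Q j) (le_iSup_of_le ⟨hQcube j, hxQ j⟩ le_rfl)
    have hfint : (∫⁻ y in Q j, ENNReal.ofReal (f y))
        = avgE (Q j) (fun y => ENNReal.ofReal |f y|) * volume (Q j) := by
      rw [habsf, avgE, ENNReal.div_mul_cancel (hvol0 j) (hvoltop j)]
    have hgint : (∫⁻ z in Q j, ENNReal.ofReal (g z))
        = avgE (Q j) (fun z => ENNReal.ofReal |g z|) * volume (Q j) := by
      rw [habsg, avgE, ENNReal.div_mul_cancel (hvol0 j) (hvoltop j)]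
    calc (∫⁻ y in Q j, ENNReal.ofReal (f y)) * (∫⁻ z in Q j, ENNReal.ofReal (g z))
        = (avgE (Q j) (fun y => ENNReal.ofReal |f y|) *
            avgE (Q j) (fun z => ENNReal.ofReal |g z|)) * (volume (Q j) * volume (Q j)) := by
          rw [hfint, hgint]; ring
      _ ≤ B * (volume (Q j) * volume (Q j)) := by gcongr
      _ = volume (Q j) * volume (Q j) * B := by ring
  -- the dyadic pieces
  set a : ℕ → ℝ := fun j => (r j / 2) ^ e with ha
  have ha_nonneg : ∀ j, 0 ≤ a j := fun j => Real.rpow_nonneg (by positivity) _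
  set H : ℕ → (Fin n → ℝ) → (Fin n → ℝ) → ENNReal := fun j y z =>
    ENNReal.ofReal (a j) * (Q j).indicator (fun y => ENNReal.ofReal (f y)) y *
      (Q j).indicator (fun z => ENNReal.ofReal (g z)) z with hH
  -- pointwise domination
  have hpt : ∀ y z : Fin n → ℝ,
      ({z : Fin n → ℝ | δ / 2 < max ‖x - y‖ ‖x - z‖}).indicator
        (fun z => ENNReal.ofReal ((‖x - y‖ + ‖x - z‖) ^ e * f y * g z)) z
        ≤ ∑' j, H j y z := by
    intro y z
    by_cases hz : z ∈ {z : Fin n → ℝ | δ / 2 < max ‖x - y‖ ‖x - z‖}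
    · rw [indicator_of_mem hz]
      set m := max ‖x - y‖ ‖x - z‖ with hm
      have hmδ : δ / 2 < m := hz
      have hm0 : 0 < m := lt_trans (by positivity) hmδ
      have hex : ∃ j : ℕ, m ≤ r j := by
        obtain ⟨k, hk⟩ := exists_nat_gt (m / δ)
        refine ⟨k, ?_⟩
        have h2 : (k:ℝ) ≤ 2 ^ k := by
          exact_mod_cast (Nat.lt_two_pow_self).le
        have : m / δ ≤ 2 ^ k := le_trans hk.le h2
        rw [hr]
        calc m = m / δ * δ := by field_simp
          _ ≤ 2 ^ k * δ := by nlinarith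
      set j := Nat.find hex with hj
      have hju : m ≤ r j := Nat.find_spec hex
      have hjl : r j / 2 < m := by
        rcases Nat.eq_zero_or_pos j with h0 | h0
        · rw [h0]; simpa [hr] using hmδ
        · obtain ⟨k, hk⟩ := Nat.exists_eq_succ_of_ne_zero h0.ne'
          have hnot : ¬ m ≤ r k := Nat.find_min hex (by omega)
          push_neg at hnot
          have : r j / 2 = r k := by
            rw [hk, hr]; simp only []; rw [pow_succ]; ring
          linarith
      -- both y and z are in Q j
      have hy : y ∈ Q j := hmemQ j y (le_trans (le_max_left _ _) hju)
      have hzQ : z ∈ Q j := hmemQ j z (le_trans (le_max_right _ _) hju)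
      have hsum : r j / 2 ≤ ‖x - y‖ + ‖x - z‖ := by
        have : m ≤ ‖x - y‖ + ‖x - z‖ :=
          max_le (le_add_of_nonneg_right (norm_nonneg _)) (le_add_of_nonneg_left (norm_nonneg _))
        linarith
      have hker : (‖x - y‖ + ‖x - z‖) ^ e ≤ a j :=
        Real.rpow_le_rpow_of_nonpos (by positivity) hsum he_neg
      have hle : ENNReal.ofReal ((‖x - y‖ + ‖x - z‖) ^ e * f y * g z) ≤ H j y z := by
        rw [hH]
        simp only [indicator_of_mem hy, indicator_of_mem hzQ]
        rw [← ENNReal.ofReal_mul (ha_nonneg j), ← ENNReal.ofReal_mul (mul_nonneg (ha_nonneg j) (hf0 y))]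
        apply ENNReal.ofReal_le_ofReal
        have h1 : (‖x - y‖ + ‖x - z‖) ^ e * f y ≤ a j * f y :=
          mul_le_mul_of_nonneg_right hker (hf0 y)
        exact mul_le_mul_of_nonneg_right h1 (hg0 z)
      exact le_trans hle (ENNReal.le_tsum j)
    · rw [indicator_of_notMem hz]; exact zero_le
  -- measurability of the pieces
  have hfm : Measurable fun y => ENNReal.ofReal (f y) := hf.ennreal_ofReal
  have hgm : Measurable fun z => ENNReal.ofReal (g z) := hg.ennreal_ofReal
  have hIfm : ∀ j, Measurable ((Q j).indicator fun y => ENNReal.ofReal (f y)) :=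
    fun j => hfm.indicator (hQmeas j)
  have hIgm : ∀ j, Measurable ((Q j).indicator fun z => ENNReal.ofReal (g z)) :=
    fun j => hgm.indicator (hQmeas j)
  -- compute the double integral of H j
  have hint : ∀ j, (∫⁻ y, ∫⁻ z, H j y z) = ENNReal.ofReal (a j) *
      ((∫⁻ y in Q j, ENNReal.ofReal (f y)) * (∫⁻ z in Q j, ENNReal.ofReal (g z))) := by
    intro j
    have inner : ∀ y, (∫⁻ z, H j y z) =
        (ENNReal.ofReal (a j) * (Q j).indicator (fun y => ENNReal.ofReal (f y)) y) *
          ∫⁻ z in Q j, ENNReal.ofReal (g z) := by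
      intro y
      rw [hH]
      simp only []
      rw [lintegral_const_mul _ (hIgm j), lintegral_indicator (hQmeas j)]
    calc (∫⁻ y, ∫⁻ z, H j y z)
        = ∫⁻ y, (ENNReal.ofReal (a j) * (Q j).indicator (fun y => ENNReal.ofReal (f y)) y) *
            ∫⁻ z in Q j, ENNReal.ofReal (g z) := by
          exact lintegral_congr inner
      _ = (∫⁻ y, ENNReal.ofReal (a j) * (Q j).indicator (fun y => ENNReal.ofReal (f y)) y) *
            ∫⁻ z in Q j, ENNReal.ofReal (g z) := by
          rw [lintegral_mul_const _ ((hIfm j).const_mul _)]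
      _ = (ENNReal.ofReal (a j) * ∫⁻ y, (Q j).indicator (fun y => ENNReal.ofReal (f y)) y) *
            ∫⁻ z in Q j, ENNReal.ofReal (g z) := by
          rw [lintegral_const_mul _ (hIfm j)]
      _ = ENNReal.ofReal (a j) *
            ((∫⁻ y in Q j, ENNReal.ofReal (f y)) * (∫⁻ z in Q j, ENNReal.ofReal (g z))) := by
          rw [lintegral_indicator (hQmeas j)]; ring
  -- the coefficient sum
  have hco : ∀ j, ENNReal.ofReal (a j) * (volume (Q j) * volume (Q j)) =
      ENNReal.ofReal (2 ^ (4 * n + 1) / δ) * ENNReal.ofReal 2⁻¹ ^ j := by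
    intro j
    have hrj : (0:ℝ) < 2 * r j := by positivity
    have haj : a j = ((r j / 2) ^ (2 * n + 1 : ℕ))⁻¹ := by
      rw [ha]
      simp only []
      have h1 : e = -((2 * n + 1 : ℕ) : ℝ) := by rw [he]; push_cast; ring
      rw [h1, Real.rpow_neg (by positivity), Real.rpow_natCast]
    have hreal : a j * ((2 * r j) ^ n * (2 * r j) ^ n)
        = 2 ^ (4 * n + 1) / δ * (2⁻¹ : ℝ) ^ j := by
      rw [haj, hr]
      simp only []
      have h1 : (2:ℝ) ^ j ≠ 0 := by positivity
      rw [div_pow, inv_div, inv_pow]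
      field_simp
      ring
    rw [hvol j, ← ENNReal.ofReal_pow hrj.le, ← ENNReal.ofReal_mul (by positivity),
      ← ENNReal.ofReal_mul (ha_nonneg j), hreal,
      ENNReal.ofReal_mul (by positivity), ENNReal.ofReal_pow (by norm_num)]
  -- main chain
  have hSmeas : ∀ y : Fin n → ℝ,
      MeasurableSet {z : Fin n → ℝ | δ / 2 < max ‖x - y‖ ‖x - z‖} := by
    intro y
    apply measurableSet_lt measurable_const
    exact measurable_const.max ((continuous_const.sub continuous_id).norm.measurable)
  calc (∫⁻ y, ∫⁻ z in {z : Fin n → ℝ | δ / 2 < max ‖x - y‖ ‖x - z‖},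
          ENNReal.ofReal ((‖x - y‖ + ‖x - z‖) ^ (-(2 * n : ℝ) - 1) * f y * g z))
      ≤ ∫⁻ y, ∫⁻ z, ∑' j, H j y z := by
        apply lintegral_mono
        intro y
        exact le_trans (le_of_eq (lintegral_indicator (hSmeas y) _).symm)
          (lintegral_mono (hpt y))
    _ = ∫⁻ y, ∑' j, ∫⁻ z, H j y z := by
        apply lintegral_congr
        intro y
        exact lintegral_tsum fun j =>
          ((measurable_const.mul (hIgm j))).aemeasurable
    _ = ∑' j, ∫⁻ y, ∫⁻ z, H j y z := by
        apply lintegral_tsum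
        intro j
        apply Measurable.aemeasurable
        have : (fun y => ∫⁻ z, H j y z) = fun y =>
            (ENNReal.ofReal (a j) * (Q j).indicator (fun y => ENNReal.ofReal (f y)) y) *
              ∫⁻ z in Q j, ENNReal.ofReal (g z) := by
          funext y
          rw [hH]
          simp only []
          rw [lintegral_const_mul _ (hIgm j), lintegral_indicator (hQmeas j)]
        rw [this]
        exact (measurable_const.mul (hIfm j)).mul measurable_const
    _ ≤ ∑' j, ENNReal.ofReal (a j) * (volume (Q j) * volume (Q j) * B) := by
        apply ENNReal.tsum_le_tsum
        intro j
        rw [hint j]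
        exact mul_le_mul_of_nonneg_left (hcube j) (by positivity)
    _ = (∑' j, ENNReal.ofReal (a j) * (volume (Q j) * volume (Q j))) * B := by
        rw [← ENNReal.tsum_mul_right]
        congr 1
        funext j
        ring
    _ = (∑' j : ℕ, ENNReal.ofReal (2 ^ (4 * n + 1) / δ) * ENNReal.ofReal 2⁻¹ ^ j) * B := by
        congr 1
        exact tsum_congr hco
    _ = ENNReal.ofReal (2 ^ (4 * n + 2) / δ) * B := by
        congr 1
        rw [ENNReal.tsum_mul_left, ENNReal.tsum_geometric]
        have h2 : ENNReal.ofReal 2⁻¹ = 2⁻¹ := by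
          rw [ENNReal.ofReal_inv_of_pos (by norm_num)]
          norm_num
        rw [h2, ENNReal.one_sub_inv_two, inv_inv]
        rw [← ENNReal.ofReal_ofNat 2, ← ENNReal.ofReal_mul (by positivity)]
        congr 1
        field_simp
        ring
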